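/- Consider the layer problem of the three-component negative feedback oscillator: N(x,y,z) = (α₁(1/(1+z²) − x), α₂x − 1, α₃(y − z)) and f(x,y,z) = y, with parameters α₁, α₃ > 0 and α₂ > 1, and let K = (1/α₂, 0, √(α₂ − 1)). Then f(K) = 0, (L_N f)(K) = 0, (L_N² f)(K) = 0, and (L_N³ f)(K) = 2 α₁ α₃ (α₂ − 1)/α₂ ≠ 0, so K is a contact point of order two; moreover the 2×3 matrix with rows Df(K) = (0, 1, 0) and D(L_N f)(K) = (α₂, 0, 0) has rank 2. Hence K is a contact cusp. -/

import Mathlib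

/-- The Lie derivative of a scalar function g along the vector field N:
(L_N g)(z) = Dg(z) N(z). Iterated Lie derivatives are given by `(lieD N)^[j] g`. -/
noncomputable def lieD {n : ℕ} (N : (Fin n → ℝ) → (Fin n → ℝ))
    (g : (Fin n → ℝ) → ℝ) : (Fin n → ℝ) → ℝ :=
  fun z => fderiv ℝ g z (N z)

/-- For the three-component negative feedback oscillator (α₁, α₃ > 0,
α₂ > 1) and K = (1/α₂, 0, √(α₂ − 1)): f(K) = L_N f(K) = L_N² f(K) = 0 and
L_N³ f(K) = 2α₁α₃(α₂ − 1)/α₂ ≠ 0, so K is a contact point of order two; moreover the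
2×3 matrix with rows Df(K) = (0,1,0) and D(L_N f)(K) = (α₂,0,0) has rank 2.
Hence K is a contact cusp. -/
theorem three_component_oscillator_cusp (α₁ α₂ α₃ : ℝ)
    (h₁ : 0 < α₁) (h₃ : 0 < α₃) (h₂ : 1 < α₂)
    (N : (Fin 3 → ℝ) → (Fin 3 → ℝ))
    (hN : N = fun p => ![α₁ * (1 / (1 + (p 2) ^ 2) - p 0),
      α₂ * p 0 - 1, α₃ * (p 1 - p 2)])
    (f : (Fin 3 → ℝ) → ℝ) (hf : f = fun p => p 1)
    (K : Fin 3 → ℝ) (hK : K = ![1 / α₂, 0, Real.sqrt (α₂ - 1)]) :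
    f K = 0 ∧ lieD N f K = 0 ∧ (lieD N)^[2] f K = 0 ∧
      ((lieD N)^[3] f K = 2 * α₁ * α₃ * (α₂ - 1) / α₂ ∧ (lieD N)^[3] f K ≠ 0) ∧
      (fun i => fderiv ℝ f K (Pi.single i 1)) = ![0, 1, 0] ∧
      (fun i => fderiv ℝ (lieD N f) K (Pi.single i 1)) = ![α₂, 0, 0] ∧
      (Matrix.of ![fun i => fderiv ℝ f K (Pi.single i 1),
        fun i => fderiv ℝ (lieD N f) K (Pi.single i 1)]).rank = 2 := by
  have hα₂ : (0:ℝ) < α₂ := lt_trans one_pos h₂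
  have hα₂' : α₂ ≠ 0 := ne_of_gt hα₂
  set s := Real.sqrt (α₂ - 1) with hs
  have hs2 : s ^ 2 = α₂ - 1 := Real.sq_sqrt (by linarith)
  -- values of K
  have hK0 : K 0 = 1 / α₂ := by rw [hK]; rfl
  have hK1 : K 1 = 0 := by rw [hK]; rfl
  have hK2 : K 2 = s := by rw [hK]; rfl
  -- derivative of f everywhere
  have hf' : ∀ z, HasFDerivAt f
      (ContinuousLinearMap.proj (R := ℝ) (φ := fun _ : Fin 3 => ℝ) 1) z := by
    intro z; rw [hf]; exact hasFDerivAt_apply 1 z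
  -- first Lie derivative
  have hL1 : lieD N f = fun z => α₂ * z 0 - 1 := by
    funext z
    rw [lieD, (hf' z).fderiv, hN]
    simp
  -- derivative of lieD N f everywhere
  have hL1' : ∀ z, HasFDerivAt (lieD N f)
      (α₂ • ContinuousLinearMap.proj (R := ℝ) (φ := fun _ : Fin 3 => ℝ) 0) z := by
    intro z; rw [hL1]
    exact ((hasFDerivAt_apply 0 z).const_mul α₂).sub_const 1
  -- second Lie derivative
  have hL2 : lieD N (lieD N f) = fun z => α₂ * (α₁ * (1 / (1 + (z 2) ^ 2) - z 0)) := by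
    funext z
    rw [lieD, (hL1' z).fderiv, hN]
    simp
  -- derivative of second Lie derivative at K
  have hq : (1 : ℝ) + (K 2) ^ 2 = α₂ := by rw [hK2, hs2]; ring
  have hK2' : HasFDerivAt (fun z : Fin 3 → ℝ => z 2)
      (ContinuousLinearMap.proj (R := ℝ) (φ := fun _ : Fin 3 => ℝ) 2) K :=
    hasFDerivAt_apply 2 K
  have hsq : HasFDerivAt (fun z : Fin 3 → ℝ => 1 + (z 2) ^ 2)
      (K 2 • ContinuousLinearMap.proj (R := ℝ) (φ := fun _ : Fin 3 => ℝ) 2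
        + K 2 • ContinuousLinearMap.proj (R := ℝ) (φ := fun _ : Fin 3 => ℝ) 2) K := by
    simp only [pow_two]
    exact (hK2'.mul hK2').const_add 1
  have hinv : HasFDerivAt (fun z : Fin 3 → ℝ => (1 + (z 2) ^ 2)⁻¹)
      ((-(ContinuousLinearMap.mulLeftRight ℝ ℝ (1 + (K 2)^2)⁻¹ (1 + (K 2)^2)⁻¹)).comp
        (K 2 • ContinuousLinearMap.proj (R := ℝ) (φ := fun _ : Fin 3 => ℝ) 2
        + K 2 • ContinuousLinearMap.proj (R := ℝ) (φ := fun _ : Fin 3 => ℝ) 2)) K := by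
    exact (hasFDerivAt_inv' (by rw [hq]; exact hα₂')).comp K hsq
  have hL2' : HasFDerivAt (lieD N (lieD N f))
      (α₂ • (α₁ • (((-(ContinuousLinearMap.mulLeftRight ℝ ℝ (1 + (K 2)^2)⁻¹ (1 + (K 2)^2)⁻¹)).comp
        (K 2 • ContinuousLinearMap.proj (R := ℝ) (φ := fun _ : Fin 3 => ℝ) 2
        + K 2 • ContinuousLinearMap.proj (R := ℝ) (φ := fun _ : Fin 3 => ℝ) 2))
        - ContinuousLinearMap.proj (R := ℝ) (φ := fun _ : Fin 3 => ℝ) 0))) K := by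
    rw [hL2]
    simp only [one_div]
    exact ((hinv.sub (hasFDerivAt_apply 0 K)).const_mul α₁).const_mul α₂
  -- components of N K
  have hNK0 : N K 0 = 0 := by
    rw [hN]; simp only [Matrix.cons_val_zero]
    rw [hq, hK0]; ring
  have hNK1 : N K 1 = 0 := by
    rw [hN]; simp only [Matrix.cons_val_one, Matrix.head_cons]
    rw [hK0]; field_simp; simp
  have hNK2 : N K 2 = -(α₃ * s) := by
    rw [hN]; simp only [Matrix.cons_val_two]
    simp [hK1, hK2]
  -- third Lie derivative value
  have hL3 : lieD N (lieD N (lieD N f)) K = 2 * α₁ * α₃ * (α₂ - 1) / α₂ := by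
    rw [lieD, hL2'.fderiv]
    simp only [ContinuousLinearMap.smul_apply, ContinuousLinearMap.sub_apply,
      ContinuousLinearMap.comp_apply, ContinuousLinearMap.neg_apply,
      ContinuousLinearMap.add_apply, ContinuousLinearMap.mulLeftRight_apply,
      ContinuousLinearMap.proj_apply, smul_eq_mul]
    rw [hNK0, hNK2, hq, hK2]
    field_simp
    linear_combination 2*α₃*hs2
  have hiter2 : (lieD N)^[2] f = lieD N (lieD N f) := rfl
  have hiter3 : (lieD N)^[3] f = lieD N (lieD N (lieD N f)) := rfl
  refine ⟨?_, ?_, ?_, ⟨?_, ?_⟩, ?_, ?_, ?_⟩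
  · rw [hf]; exact hK1
  · rw [hL1]; show α₂ * K 0 - 1 = 0; rw [hK0]; field_simp; norm_num
  · rw [hiter2, hL2]
    show α₂ * (α₁ * (1 / (1 + K 2 ^ 2) - K 0)) = 0
    rw [hq, hK0]; ring
  · rw [hiter3, hL3]
  · rw [hiter3, hL3]
    have : α₂ - 1 > 0 := by linarith
    positivity
  · funext i
    rw [(hf' K).fderiv]
    fin_cases i <;> simp [Pi.single]
  · funext i
    rw [(hL1' K).fderiv]
    fin_cases i <;> simp [Pi.single]
  · -- rank
    have e1 : (fun i => fderiv ℝ f K (Pi.single i 1)) = ![0, 1, 0] := by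
      funext i
      rw [(hf' K).fderiv]
      fin_cases i <;> simp [Pi.single]
    have e2 : (fun i => fderiv ℝ (lieD N f) K (Pi.single i 1)) = ![α₂, 0, 0] := by
      funext i
      rw [(hL1' K).fderiv]
      fin_cases i <;> simp [Pi.single]
    rw [e1, e2]
    set M : Matrix (Fin 2) (Fin 3) ℝ := Matrix.of ![![(0:ℝ), 1, 0], ![α₂, 0, 0]] with hM
    have hsurj : Function.Surjective M.mulVecLin := by
      intro w
      refine ⟨![w 1 / α₂, w 0, 0], ?_⟩
      funext i
      fin_cases i <;>
        first
        | (simp [hM, Matrix.mulVecLin, Matrix.mulVec, dotProduct, Fin.sum_univ_three];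
           field_simp)
        | simp [hM, Matrix.mulVecLin, Matrix.mulVec, dotProduct, Fin.sum_univ_three]
    rw [Matrix.rank, LinearMap.range_eq_top.2 hsurj, finrank_top]
    simp
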